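/- In the polynomial ring ℂ[t₁,t₂,t₃,Z], let P = Z⁴ + t₃Z + t₂ and let y₁ = (128000/19683)(12000t₁³ − 3360t₁t₂²Z² − 3390t₁t₂t₃² − 3120t₁t₂t₃Z³ + 810t₁t₃³Z + 4112t₂³t₃ + 2176t₂³Z³ − 2176t₂²t₃²Z − 119t₂t₃³Z² + 200t₃⁵ + 119t₃⁴Z³), y₂ = (3200/729)(180t₁t₂ − 32t₂²Z − 22t₂t₃Z² − 5t₃³ − 5t₃²Z³), y₃ = (20/3)t₃. Then for every i, j ∈ {1,2,3} there exists a polynomial D ∈ ℂ[t₁,t₂,t₃,Z] such that (∂P/∂Z)·(∂yᵢ/∂tⱼ) − (∂yᵢ/∂Z)·(∂P/∂tⱼ) − (∂P/∂Z)·D lies in the ideal of ℂ[t₁,t₂,t₃,Z] generated by P. (Equivalently: the implicit derivatives ∂yᵢ/∂tⱼ, computed with Z an algebraic function of (t₂,t₃) via P = 0, are polynomials in t₁,t₂,t₃,Z.) -/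
import Mathlib


open MvPolynomial

noncomputable section

/-- The polynomial `P = Z⁴ + t₃Z + t₂` in `ℂ[t₁,t₂,t₃,Z]` (variables `X 0, X 1, X 2, X 3`
are `t₁, t₂, t₃, Z`). -/
def PH31 : MvPolynomial (Fin 4) ℂ := X 3 ^ 4 + X 2 * X 3 + X 1

/-- The `H₃` basic invariants in the flat coordinates of `(H₃)′`, as elements of
`ℂ[t₁,t₂,t₃,Z]`. -/
def YH31 : Fin 3 → MvPolynomial (Fin 4) ℂ :=
  ![C ((128000 : ℂ) / 19683) *
      (12000 * X 0 ^ 3 - 3360 * X 0 * X 1 ^ 2 * X 3 ^ 2 - 3390 * X 0 * X 1 * X 2 ^ 2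
        - 3120 * X 0 * X 1 * X 2 * X 3 ^ 3 + 810 * X 0 * X 2 ^ 3 * X 3 + 4112 * X 1 ^ 3 * X 2
        + 2176 * X 1 ^ 3 * X 3 ^ 3 - 2176 * X 1 ^ 2 * X 2 ^ 2 * X 3
        - 119 * X 1 * X 2 ^ 3 * X 3 ^ 2 + 200 * X 2 ^ 5 + 119 * X 2 ^ 4 * X 3 ^ 3),
    C ((3200 : ℂ) / 729) *
      (180 * X 0 * X 1 - 32 * X 1 ^ 2 * X 3 - 22 * X 1 * X 2 * X 3 ^ 2 - 5 * X 2 ^ 3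
        - 5 * X 2 ^ 2 * X 3 ^ 3),
    C ((20 : ℂ) / 3) * X 2]

lemma pderiv_ofNat' {σ : Type*} (i : σ) (n : ℕ) [n.AtLeastTwo] :
    pderiv i (no_index (OfNat.ofNat n) : MvPolynomial σ ℂ) = 0 := by
  rw [← map_ofNat (C : ℂ →+* MvPolynomial σ ℂ) n]; exact pderiv_C

lemma case_0_0 : ∃ D : MvPolynomial (Fin 4) ℂ,
      pderiv (3 : Fin 4) PH31 * pderiv ((Fin.castSucc 0) : Fin 4) (YH31 0)
          - pderiv (3 : Fin 4) (YH31 0) * pderiv ((Fin.castSucc 0) : Fin 4) PH31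
          - pderiv (3 : Fin 4) PH31 * D
        ∈ Ideal.span {PH31} := by
  refine ⟨C ((128000 : ℂ) / 19683) * ((36000 : MvPolynomial (Fin 4) ℂ) * X 0 ^ 2 - (3360 : MvPolynomial (Fin 4) ℂ) * X 1 ^ 2 * X 3 ^ 2 - (3390 : MvPolynomial (Fin 4) ℂ) * X 1 * X 2 ^ 2 - (3120 : MvPolynomial (Fin 4) ℂ) * X 1 * X 2 * X 3 ^ 3 + (810 : MvPolynomial (Fin 4) ℂ) * X 2 ^ 3 * X 3), Ideal.mem_span_singleton'.mpr ⟨0, ?_⟩⟩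
  simp only [PH31, YH31, Matrix.cons_val_zero, Matrix.cons_val_one, Matrix.head_cons,
    Matrix.cons_val_two, Matrix.tail_cons, Fin.isValue, map_add, map_sub, pderiv_mul,
    pderiv_pow, pderiv_C, pderiv_ofNat', pderiv_X_self,
    show ((Fin.castSucc 0) : Fin 4) = 0 from rfl,
    pderiv_X_of_ne (show (1:Fin 4) ≠ 0 by decide), pderiv_X_of_ne (show (2:Fin 4) ≠ 0 by decide), pderiv_X_of_ne (show (3:Fin 4) ≠ 0 by decide), pderiv_X_of_ne (show (0:Fin 4) ≠ 3 by decide), pderiv_X_of_ne (show (1:Fin 4) ≠ 3 by decide), pderiv_X_of_ne (show (2:Fin 4) ≠ 3 by decide)]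
  ring

lemma case_0_1 : ∃ D : MvPolynomial (Fin 4) ℂ,
      pderiv (3 : Fin 4) PH31 * pderiv ((Fin.castSucc 1) : Fin 4) (YH31 0)
          - pderiv (3 : Fin 4) (YH31 0) * pderiv ((Fin.castSucc 1) : Fin 4) PH31
          - pderiv (3 : Fin 4) PH31 * D
        ∈ Ideal.span {PH31} := by
  refine ⟨C ((128000 : ℂ) / 19683) * (- (8400 : MvPolynomial (Fin 4) ℂ) * X 0 * X 1 * X 3 ^ 2 - (4200 : MvPolynomial (Fin 4) ℂ) * X 0 * X 2 ^ 2 - (4200 : MvPolynomial (Fin 4) ℂ) * X 0 * X 2 * X 3 ^ 3 + (13560 : MvPolynomial (Fin 4) ℂ) * X 1 ^ 2 * X 2 + (8160 : MvPolynomial (Fin 4) ℂ) * X 1 ^ 2 * X 3 ^ 3 - (4590 : MvPolynomial (Fin 4) ℂ) * X 1 * X 2 ^ 2 * X 3), Ideal.mem_span_singleton'.mpr ⟨C ((128000 : ℂ) / 19683) * ((6720 : MvPolynomial (Fin 4) ℂ) * X 0 * X 1 * X 3 + (4320 : MvPolynomial (Fin 4) ℂ) * X 0 * X 2 * X 3 ^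 2 - (6528 : MvPolynomial (Fin 4) ℂ) * X 1 ^ 2 * X 3 ^ 2 + (952 : MvPolynomial (Fin 4) ℂ) * X 1 * X 2 ^ 2 - (476 : MvPolynomial (Fin 4) ℂ) * X 2 ^ 3 * X 3), ?_⟩⟩
  simp only [PH31, YH31, Matrix.cons_val_zero, Matrix.cons_val_one, Matrix.head_cons,
    Matrix.cons_val_two, Matrix.tail_cons, Fin.isValue, map_add, map_sub, pderiv_mul,
    pderiv_pow, pderiv_C, pderiv_ofNat', pderiv_X_self,
    show ((Fin.castSucc 1) : Fin 4) = 1 from rfl,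
    pderiv_X_of_ne (show (0:Fin 4) ≠ 1 by decide), pderiv_X_of_ne (show (2:Fin 4) ≠ 1 by decide), pderiv_X_of_ne (show (3:Fin 4) ≠ 1 by decide), pderiv_X_of_ne (show (0:Fin 4) ≠ 3 by decide), pderiv_X_of_ne (show (1:Fin 4) ≠ 3 by decide), pderiv_X_of_ne (show (2:Fin 4) ≠ 3 by decide)]
  ring

lemma case_0_2 : ∃ D : MvPolynomial (Fin 4) ℂ,
      pderiv (3 : Fin 4) PH31 * pderiv ((Fin.castSucc 2) : Fin 4) (YH31 0)
          - pderiv (3 : Fin 4) (YH31 0) * pderiv ((Fin.castSucc 2) : Fin 4) PH31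
          - pderiv (3 : Fin 4) PH31 * D
        ∈ Ideal.span {PH31} := by
  refine ⟨C ((128000 : ℂ) / 19683) * (- (5700 : MvPolynomial (Fin 4) ℂ) * X 0 * X 1 * X 2 - (4800 : MvPolynomial (Fin 4) ℂ) * X 0 * X 1 * X 3 ^ 3 + (2700 : MvPolynomial (Fin 4) ℂ) * X 0 * X 2 ^ 2 * X 3 + (2480 : MvPolynomial (Fin 4) ℂ) * X 1 ^ 3 - (4760 : MvPolynomial (Fin 4) ℂ) * X 1 ^ 2 * X 2 * X 3 - (595 : MvPolynomial (Fin 4) ℂ) * X 1 * X 2 ^ 2 * X 3 ^ 2 + (1000 : MvPolynomial (Fin 4) ℂ) * X 2 ^ 4 + (595 : MvPolynomial (Fin 4) ℂ) * X 2 ^ 3 * X 3 ^ 3), Ideal.mem_span_singleton'.mpr ⟨C ((128000 : ℂ) / 19683) * ((6720 : MvPolynomial (Fin 4) ℂ) * X 0 * X 1 * X 3 ^ 2 - (1080 : MvPolynomial (Fin 4) ℂ) * X 0 * X 2 ^ 2 + (1632 : MvPolynomial (Fin 4) ℂ) * X 1 ^ 2 * X 2 + (952 : MvPolynomial (Fin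 4) ℂ) * X 1 * X 2 ^ 2 * X 3 - (476 : MvPolynomial (Fin 4) ℂ) * X 2 ^ 3 * X 3 ^ 2), ?_⟩⟩
  simp only [PH31, YH31, Matrix.cons_val_zero, Matrix.cons_val_one, Matrix.head_cons,
    Matrix.cons_val_two, Matrix.tail_cons, Fin.isValue, map_add, map_sub, pderiv_mul,
    pderiv_pow, pderiv_C, pderiv_ofNat', pderiv_X_self,
    show ((Fin.castSucc 2) : Fin 4) = 2 from rfl,
    pderiv_X_of_ne (show (0:Fin 4) ≠ 2 by decide), pderiv_X_of_ne (show (1:Fin 4) ≠ 2 by decide), pderiv_X_of_ne (show (3:Fin 4) ≠ 2 by decide), pderiv_X_of_ne (show (0:Fin 4) ≠ 3 by decide), pderiv_X_of_ne (show (1:Fin 4) ≠ 3 by decide), pderiv_X_of_ne (show (2:Fin 4) ≠ 3 by decide)]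
  ring

lemma case_1_0 : ∃ D : MvPolynomial (Fin 4) ℂ,
      pderiv (3 : Fin 4) PH31 * pderiv ((Fin.castSucc 0) : Fin 4) (YH31 1)
          - pderiv (3 : Fin 4) (YH31 1) * pderiv ((Fin.castSucc 0) : Fin 4) PH31
          - pderiv (3 : Fin 4) PH31 * D
        ∈ Ideal.span {PH31} := by
  refine ⟨C ((3200 : ℂ) / 729) * ((180 : MvPolynomial (Fin 4) ℂ) * X 1), Ideal.mem_span_singleton'.mpr ⟨0, ?_⟩⟩
  simp only [PH31, YH31, Matrix.cons_val_zero, Matrix.cons_val_one, Matrix.head_cons,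
    Matrix.cons_val_two, Matrix.tail_cons, Fin.isValue, map_add, map_sub, pderiv_mul,
    pderiv_pow, pderiv_C, pderiv_ofNat', pderiv_X_self,
    show ((Fin.castSucc 0) : Fin 4) = 0 from rfl,
    pderiv_X_of_ne (show (1:Fin 4) ≠ 0 by decide), pderiv_X_of_ne (show (2:Fin 4) ≠ 0 by decide), pderiv_X_of_ne (show (3:Fin 4) ≠ 0 by decide), pderiv_X_of_ne (show (0:Fin 4) ≠ 3 by decide), pderiv_X_of_ne (show (1:Fin 4) ≠ 3 by decide), pderiv_X_of_ne (show (2:Fin 4) ≠ 3 by decide)]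
  ring

lemma case_1_1 : ∃ D : MvPolynomial (Fin 4) ℂ,
      pderiv (3 : Fin 4) PH31 * pderiv ((Fin.castSucc 1) : Fin 4) (YH31 1)
          - pderiv (3 : Fin 4) (YH31 1) * pderiv ((Fin.castSucc 1) : Fin 4) PH31
          - pderiv (3 : Fin 4) PH31 * D
        ∈ Ideal.span {PH31} := by
  refine ⟨C ((3200 : ℂ) / 729) * ((180 : MvPolynomial (Fin 4) ℂ) * X 0 - (72 : MvPolynomial (Fin 4) ℂ) * X 1 * X 3 - (27 : MvPolynomial (Fin 4) ℂ) * X 2 * X 3 ^ 2), Ideal.mem_span_singleton'.mpr ⟨C ((3200 : ℂ) / 729) * ((32 : MvPolynomial (Fin 4) ℂ) * X 1 + (20 : MvPolynomial (Fin 4) ℂ) * X 2 * X 3), ?_⟩⟩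
  simp only [PH31, YH31, Matrix.cons_val_zero, Matrix.cons_val_one, Matrix.head_cons,
    Matrix.cons_val_two, Matrix.tail_cons, Fin.isValue, map_add, map_sub, pderiv_mul,
    pderiv_pow, pderiv_C, pderiv_ofNat', pderiv_X_self,
    show ((Fin.castSucc 1) : Fin 4) = 1 from rfl,
    pderiv_X_of_ne (show (0:Fin 4) ≠ 1 by decide), pderiv_X_of_ne (show (2:Fin 4) ≠ 1 by decide), pderiv_X_of_ne (show (3:Fin 4) ≠ 1 by decide), pderiv_X_of_ne (show (0:Fin 4) ≠ 3 by decide), pderiv_X_of_ne (show (1:Fin 4) ≠ 3 by decide), pderiv_X_of_ne (show (2:Fin 4) ≠ 3 by decide)]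
  ring

lemma case_1_2 : ∃ D : MvPolynomial (Fin 4) ℂ,
      pderiv (3 : Fin 4) PH31 * pderiv ((Fin.castSucc 2) : Fin 4) (YH31 1)
          - pderiv (3 : Fin 4) (YH31 1) * pderiv ((Fin.castSucc 2) : Fin 4) PH31
          - pderiv (3 : Fin 4) PH31 * D
        ∈ Ideal.span {PH31} := by
  refine ⟨C ((3200 : ℂ) / 729) * (- (30 : MvPolynomial (Fin 4) ℂ) * X 1 * X 3 ^ 2 - (15 : MvPolynomial (Fin 4) ℂ) * X 2 ^ 2 - (15 : MvPolynomial (Fin 4) ℂ) * X 2 * X 3 ^ 3), Ideal.mem_span_singleton'.mpr ⟨C ((3200 : ℂ) / 729) * ((32 : MvPolynomial (Fin 4) ℂ) * X 1 * X 3 + (20 : MvPolynomial (Fin 4) ℂ) * X 2 * X 3 ^ 2), ?_⟩⟩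
  simp only [PH31, YH31, Matrix.cons_val_zero, Matrix.cons_val_one, Matrix.head_cons,
    Matrix.cons_val_two, Matrix.tail_cons, Fin.isValue, map_add, map_sub, pderiv_mul,
    pderiv_pow, pderiv_C, pderiv_ofNat', pderiv_X_self,
    show ((Fin.castSucc 2) : Fin 4) = 2 from rfl,
    pderiv_X_of_ne (show (0:Fin 4) ≠ 2 by decide), pderiv_X_of_ne (show (1:Fin 4) ≠ 2 by decide), pderiv_X_of_ne (show (3:Fin 4) ≠ 2 by decide), pderiv_X_of_ne (show (0:Fin 4) ≠ 3 by decide), pderiv_X_of_ne (show (1:Fin 4) ≠ 3 by decide), pderiv_X_of_ne (show (2:Fin 4) ≠ 3 by decide)]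
  ring

lemma case_2_0 : ∃ D : MvPolynomial (Fin 4) ℂ,
      pderiv (3 : Fin 4) PH31 * pderiv ((Fin.castSucc 0) : Fin 4) (YH31 2)
          - pderiv (3 : Fin 4) (YH31 2) * pderiv ((Fin.castSucc 0) : Fin 4) PH31
          - pderiv (3 : Fin 4) PH31 * D
        ∈ Ideal.span {PH31} := by
  refine ⟨0, Ideal.mem_span_singleton'.mpr ⟨0, ?_⟩⟩
  simp only [PH31, YH31, Matrix.cons_val_zero, Matrix.cons_val_one, Matrix.head_cons,
    Matrix.cons_val_two, Matrix.tail_cons, Fin.isValue, map_add, map_sub, pderiv_mul,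
    pderiv_pow, pderiv_C, pderiv_ofNat', pderiv_X_self,
    show ((Fin.castSucc 0) : Fin 4) = 0 from rfl,
    pderiv_X_of_ne (show (1:Fin 4) ≠ 0 by decide), pderiv_X_of_ne (show (2:Fin 4) ≠ 0 by decide), pderiv_X_of_ne (show (3:Fin 4) ≠ 0 by decide), pderiv_X_of_ne (show (0:Fin 4) ≠ 3 by decide), pderiv_X_of_ne (show (1:Fin 4) ≠ 3 by decide), pderiv_X_of_ne (show (2:Fin 4) ≠ 3 by decide)]
  ring

lemma case_2_1 : ∃ D : MvPolynomial (Fin 4) ℂ,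
      pderiv (3 : Fin 4) PH31 * pderiv ((Fin.castSucc 1) : Fin 4) (YH31 2)
          - pderiv (3 : Fin 4) (YH31 2) * pderiv ((Fin.castSucc 1) : Fin 4) PH31
          - pderiv (3 : Fin 4) PH31 * D
        ∈ Ideal.span {PH31} := by
  refine ⟨0, Ideal.mem_span_singleton'.mpr ⟨0, ?_⟩⟩
  simp only [PH31, YH31, Matrix.cons_val_zero, Matrix.cons_val_one, Matrix.head_cons,
    Matrix.cons_val_two, Matrix.tail_cons, Fin.isValue, map_add, map_sub, pderiv_mul,
    pderiv_pow, pderiv_C, pderiv_ofNat', pderiv_X_self,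
    show ((Fin.castSucc 1) : Fin 4) = 1 from rfl,
    pderiv_X_of_ne (show (0:Fin 4) ≠ 1 by decide), pderiv_X_of_ne (show (2:Fin 4) ≠ 1 by decide), pderiv_X_of_ne (show (3:Fin 4) ≠ 1 by decide), pderiv_X_of_ne (show (0:Fin 4) ≠ 3 by decide), pderiv_X_of_ne (show (1:Fin 4) ≠ 3 by decide), pderiv_X_of_ne (show (2:Fin 4) ≠ 3 by decide)]
  ring

lemma case_2_2 : ∃ D : MvPolynomial (Fin 4) ℂ,
      pderiv (3 : Fin 4) PH31 * pderiv ((Fin.castSucc 2) : Fin 4) (YH31 2)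
          - pderiv (3 : Fin 4) (YH31 2) * pderiv ((Fin.castSucc 2) : Fin 4) PH31
          - pderiv (3 : Fin 4) PH31 * D
        ∈ Ideal.span {PH31} := by
  refine ⟨C ((20 : ℂ) / 3) * ((1 : MvPolynomial (Fin 4) ℂ)), Ideal.mem_span_singleton'.mpr ⟨0, ?_⟩⟩
  simp only [PH31, YH31, Matrix.cons_val_zero, Matrix.cons_val_one, Matrix.head_cons,
    Matrix.cons_val_two, Matrix.tail_cons, Fin.isValue, map_add, map_sub, pderiv_mul,
    pderiv_pow, pderiv_C, pderiv_ofNat', pderiv_X_self,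
    show ((Fin.castSucc 2) : Fin 4) = 2 from rfl,
    pderiv_X_of_ne (show (0:Fin 4) ≠ 2 by decide), pderiv_X_of_ne (show (1:Fin 4) ≠ 2 by decide), pderiv_X_of_ne (show (3:Fin 4) ≠ 2 by decide), pderiv_X_of_ne (show (0:Fin 4) ≠ 3 by decide), pderiv_X_of_ne (show (1:Fin 4) ≠ 3 by decide), pderiv_X_of_ne (show (2:Fin 4) ≠ 3 by decide)]
  ring

/-- The implicit derivatives `∂yᵢ/∂tⱼ` (with `Z` an algebraic function of `(t₂,t₃)` via
`P = 0`) are polynomials in `t₁, t₂, t₃, Z`: for each `i, j` there is a polynomial `D` with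
`(∂P/∂Z)·(∂yᵢ/∂tⱼ) − (∂yᵢ/∂Z)·(∂P/∂tⱼ) − (∂P/∂Z)·D ∈ (P)`. -/
theorem statement_7 :
    ∀ i : Fin 3, ∀ j : Fin 3, ∃ D : MvPolynomial (Fin 4) ℂ,
      pderiv (3 : Fin 4) PH31 * pderiv j.castSucc (YH31 i)
          - pderiv (3 : Fin 4) (YH31 i) * pderiv j.castSucc PH31
          - pderiv (3 : Fin 4) PH31 * D
        ∈ Ideal.span {PH31} := by
  intro i j
  fin_cases i <;> fin_cases j
  · exact case_0_0
  · exact case_0_1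
  · exact case_0_2
  · exact case_1_0
  · exact case_1_1
  · exact case_1_2
  · exact case_2_0
  · exact case_2_1
  · exact case_2_2
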